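/- Let c₀ ≠ 0 and consider the chain t_{1x} = t_x + c₀(t − t₁)t − c₀(t − t₁)², i.e. the case c₂ = −c₀, c₃ = 0. Given differentiable t, t₁, t₂, t₃ : ℝ → ℝ with t_{k+1}' = t_k' + c₀(t_k − t_{k+1})t_k − c₀(t_k − t_{k+1})² for k = 0,1,2, and with τ_j = t_j − t_{j+1} nowhere zero, the function F(x) = τ₁(x)/τ₂(x) − ln|τ(x)| + ln|τ₁(x)| satisfies F'(x) = 0. -/

import Mathlib

open Real

theorem stmt_5 (c₀ : ℝ) (hc₀ : c₀ ≠ 0) (t t₁ t₂ t₃ : ℝ → ℝ)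
    (ht : Differentiable ℝ t) (ht₁ : Differentiable ℝ t₁)
    (ht₂ : Differentiable ℝ t₂) (ht₃ : Differentiable ℝ t₃)
    (h₁ : ∀ x, deriv t₁ x = deriv t x + c₀ * (t x - t₁ x) * t x - c₀ * (t x - t₁ x) ^ 2)
    (h₂ : ∀ x, deriv t₂ x = deriv t₁ x + c₀ * (t₁ x - t₂ x) * t₁ x - c₀ * (t₁ x - t₂ x) ^ 2)
    (h₃ : ∀ x, deriv t₃ x = deriv t₂ x + c₀ * (t₂ x - t₃ x) * t₂ x - c₀ * (t₂ x - t₃ x) ^ 2)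
    (hτ : ∀ x, t x - t₁ x ≠ 0) (hτ₁ : ∀ x, t₁ x - t₂ x ≠ 0) (hτ₂ : ∀ x, t₂ x - t₃ x ≠ 0) :
    ∀ x, deriv (fun y =>
      (t₁ y - t₂ y) / (t₂ y - t₃ y) - Real.log |t y - t₁ y| + Real.log |t₁ y - t₂ y|) x = 0 := by
  intro x
  have e : (fun y => (t₁ y - t₂ y) / (t₂ y - t₃ y) - Real.log |t y - t₁ y| + Real.log |t₁ y - t₂ y|)
      = fun y => (t₁ y - t₂ y) / (t₂ y - t₃ y) - Real.log (t y - t₁ y) + Real.log (t₁ y - t₂ y) := by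
    funext y; rw [Real.log_abs, Real.log_abs]
  rw [e]
  have dτ : HasDerivAt (fun y => t y - t₁ y) (deriv t x - deriv t₁ x) x :=
    (ht x).hasDerivAt.sub (ht₁ x).hasDerivAt
  have dτ₁ : HasDerivAt (fun y => t₁ y - t₂ y) (deriv t₁ x - deriv t₂ x) x :=
    (ht₁ x).hasDerivAt.sub (ht₂ x).hasDerivAt
  have dτ₂ : HasDerivAt (fun y => t₂ y - t₃ y) (deriv t₂ x - deriv t₃ x) x :=
    (ht₂ x).hasDerivAt.sub (ht₃ x).hasDerivAt
  have h := ((dτ₁.div dτ₂ (hτ₂ x)).sub (dτ.log (hτ x))).add (dτ₁.log (hτ₁ x))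
  rw [HasDerivAt.deriv (f := fun y => (t₁ y - t₂ y) / (t₂ y - t₃ y) - Real.log (t y - t₁ y) + Real.log (t₁ y - t₂ y)) h]
  have e1 := h₁ x
  have e2 := h₂ x
  have e3 := h₃ x
  have hd1 : deriv t x - deriv t₁ x = -(c₀ * (t x - t₁ x) * t₁ x) := by nlinarith [e1]
  have hd2 : deriv t₁ x - deriv t₂ x = -(c₀ * (t₁ x - t₂ x) * t₂ x) := by nlinarith [e2]
  have hd3 : deriv t₂ x - deriv t₃ x = -(c₀ * (t₂ x - t₃ x) * t₃ x) := by nlinarith [e3]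
  rw [hd1, hd2, hd3]
  field_simp [hτ x, hτ₁ x, hτ₂ x]
  ring
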